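/- Let X be a nonempty finite-dimensional Noetherian topological space. Then X is biequidimensional if and only if X is equidimensional and for all irreducible closed subsets Y ⊆ Z of X one has dim(Z) = dim(Y) + codim(Y, Z). -/

import Mathlib

open Order TopologicalSpace

/-- A maximal chain of irreducible closed subsets. -/
def IsMaximalChain {α : Type*} [PartialOrder α] (p : LTSeries α) : Prop :=
  IsMin p.head ∧ IsMax p.last ∧ ∀ i : Fin p.length, p.toFun i.castSucc ⋖ p.toFun i.succ

section Aux

variable {β : Type*} [PartialOrder β]

/-- Saturated chain: all steps are covers. -/
def AuxSat (p : LTSeries β) : Prop := ∀ i : Fin p.length, p.toFun i.castSucc ⋖ p.toFun i.succ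

lemma aux_insertNth_last (p : LTSeries β) (i : Fin p.length) (a : β)
    (h1 : p i.castSucc < a) (h2 : a < p i.succ) :
    (p.insertNth i a h1 h2).last = p.last := by
  simp only [RelSeries.last, RelSeries.insertNth]
  rw [Fin.insertNth_apply_above (by simp [Fin.lt_def])]
  simp only [Fin.pred_last]
  exact eq_rec_constant _ _

lemma aux_insertNth_head (p : LTSeries β) (i : Fin p.length) (a : β)
    (h1 : p i.castSucc < a) (h2 : a < p i.succ) :
    (p.insertNth i a h1 h2).head = p.head := by
  simp only [RelSeries.head, RelSeries.insertNth]
  change Fin.insertNth (α := fun _ => β) (Fin.castSucc i.succ) a p.toFun (0 : Fin (p.length + 1 + 1)) = _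
  rw [Fin.insertNth_apply_below (by simp [Fin.lt_def])]
  simp only [eq_rec_constant]
  exact congrArg p.toFun (by ext; rfl)

lemma aux_heightFin (hd : Order.krullDim β < ⊤) (a : β) : Order.height a ≠ ⊤ := by
  intro h
  have h2 := Order.height_le_krullDim a
  rw [h] at h2
  rw [show ((⊤ : ℕ∞) : WithBot ℕ∞) = (⊤ : WithBot ℕ∞) from rfl] at h2
  exact ((h2.trans_lt hd)).false

lemma aux_coheightFin (hd : Order.krullDim β < ⊤) (a : β) : Order.coheight a ≠ ⊤ := by
  intro h
  have h2 := Order.coheight_le_krullDim a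
  rw [h] at h2
  rw [show ((⊤ : ℕ∞) : WithBot ℕ∞) = (⊤ : WithBot ℕ∞) from rfl] at h2
  exact ((h2.trans_lt hd)).false

/-- There is a saturated chain of maximal length ending at `a`, starting at a minimal element. -/
lemma aux_exists_sat_to (a : β) (hfin : Order.height a ≠ ⊤) :
    ∃ p : LTSeries β, p.last = a ∧ IsMin p.head ∧ AuxSat p ∧
      (p.length : ℕ∞) = Order.height a := by
  lift Order.height a to ℕ using hfin with n hn
  obtain ⟨p, hlast, hlen⟩ := Order.exists_series_of_height_eq_coe a hn.symm
  refine ⟨p, hlast, ?_, ?_, by rw [hlen]⟩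
  · by_contra hmin
    obtain ⟨x, hx⟩ := not_isMin_iff.mp hmin
    have h := Order.length_le_height_last (p := p.cons x hx)
    rw [RelSeries.last_cons, hlast, ← hn] at h
    have hlc : (p.cons x hx).length = p.length + 1 := by simp
    rw [hlc, hlen] at h
    have : n + 1 ≤ n := by exact_mod_cast h
    omega
  · intro i
    by_contra hcov
    obtain ⟨c, hc1, hc2⟩ := exists_lt_lt_of_not_covBy (p.step i) hcov
    have h := Order.length_le_height_last (p := p.insertNth i c hc1 hc2)
    rw [aux_insertNth_last, hlast, ← hn] at h
    have hlc : (p.insertNth i c hc1 hc2).length = p.length + 1 := by simp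
    rw [hlc, hlen] at h
    have : n + 1 ≤ n := by exact_mod_cast h
    omega

/-- There is a saturated chain starting at `a` ending at a maximal element. -/
lemma aux_exists_sat_from (a : β) (hfin : Order.coheight a ≠ ⊤) :
    ∃ p : LTSeries β, p.head = a ∧ IsMax p.last ∧ AuxSat p := by
  lift Order.coheight a to ℕ using hfin with n hn
  obtain ⟨p, hhead, hlen⟩ := Order.exists_series_of_coheight_eq_coe a hn.symm
  refine ⟨p, hhead, ?_, ?_⟩
  · by_contra hmax
    obtain ⟨x, hx⟩ := not_isMax_iff.mp hmax
    have h := Order.length_le_coheight_head (p := p.snoc x hx)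
    rw [RelSeries.head_snoc, hhead, ← hn] at h
    have hlc : (p.snoc x hx).length = p.length + 1 := by simp [RelSeries.snoc, RelSeries.append]
    rw [hlc, hlen] at h
    have : n + 1 ≤ n := by exact_mod_cast h
    omega
  · intro i
    by_contra hcov
    obtain ⟨c, hc1, hc2⟩ := exists_lt_lt_of_not_covBy (p.step i) hcov
    have h := Order.length_le_coheight_head (p := p.insertNth i c hc1 hc2)
    rw [aux_insertNth_head, hhead, ← hn] at h
    have hlc : (p.insertNth i c hc1 hc2).length = p.length + 1 := by simp
    rw [hlc, hlen] at h
    have : n + 1 ≤ n := by exact_mod_cast h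
    omega

lemma aux_sat_smash {p q : LTSeries β} (h : p.last = q.head) (hp : AuxSat p) (hq : AuxSat q) :
    AuxSat (p.smash q h) := by
  intro i
  have hi2 : i.1 < p.length + q.length := i.2
  by_cases hi : i.1 < p.length
  · have hcs : i.castSucc = Fin.castSucc ((⟨i.1, hi⟩ : Fin p.length).castAdd q.length) := by
      ext; rfl
    have hsc : i.succ = ((⟨i.1, hi⟩ : Fin p.length).castAdd q.length).succ := by ext; rfl
    show (p.smash q h) i.castSucc ⋖ (p.smash q h) i.succ
    rw [hcs, hsc, RelSeries.smash_castAdd, RelSeries.smash_succ_castAdd]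
    exact hp ⟨i.1, hi⟩
  · have hi' : i.1 - p.length < q.length := by omega
    have hcs : i.castSucc
        = Fin.castSucc ((⟨i.1 - p.length, hi'⟩ : Fin q.length).natAdd p.length) := by
      ext; simp; omega
    have hsc : i.succ = ((⟨i.1 - p.length, hi'⟩ : Fin q.length).natAdd p.length).succ := by
      ext; simp; omega
    show (p.smash q h) i.castSucc ⋖ (p.smash q h) i.succ
    rw [hcs, hsc, RelSeries.smash_natAdd, RelSeries.smash_succ_natAdd]
    exact hq ⟨i.1 - p.length, hi'⟩

/-- Lift a chain into a subset containing all its members. -/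
def auxLift (S : Set β) (p : LTSeries β) (mem : ∀ i, p.toFun i ∈ S) : LTSeries S where
  length := p.length
  toFun i := ⟨p.toFun i, mem i⟩
  step i := (Subtype.mk_lt_mk (p := (· ∈ S))).mpr (p.step i)

lemma aux_krullDim_eq_height_top {γ : Type*} [Preorder γ] (t : γ) (ht : ∀ x, x ≤ t) :
    Order.krullDim γ = (Order.height t : WithBot ℕ∞) := by
  have : Nonempty γ := ⟨t⟩
  apply le_antisymm
  · rw [Order.krullDim_eq_iSup_length]
    exact WithBot.coe_le_coe.mpr (iSup_le fun p => Order.length_le_height (ht p.last))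
  · exact Order.height_le_krullDim t

lemma aux_height_val_Iic (Z : β) :
    Order.height (⟨Z, le_refl Z⟩ : Set.Iic Z) = Order.height Z := by
  apply le_antisymm
  · exact Order.height_le_height_apply_of_strictMono
      (Subtype.val : Set.Iic Z → β) (fun _ _ h => Subtype.coe_lt_coe.mpr h) ⟨Z, le_refl Z⟩
  · apply Order.height_le
    intro p hp
    have mem : ∀ i, p.toFun i ∈ Set.Iic Z := fun i => le_trans
      (p.monotone (Fin.le_last i)) (le_of_eq hp)
    have h := Order.length_le_height_last (p := auxLift (Set.Iic Z) p mem)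
    have hlast : (auxLift (Set.Iic Z) p mem).last = (⟨Z, le_refl Z⟩ : Set.Iic Z) :=
      Subtype.ext hp
    rw [hlast] at h
    exact h

lemma aux_krullDim_Iic (Z : β) :
    Order.krullDim (Set.Iic Z) = (Order.height Z : WithBot ℕ∞) := by
  rw [aux_krullDim_eq_height_top (⟨Z, le_refl Z⟩ : Set.Iic Z)
    (fun x => Subtype.coe_le_coe.mp x.2), aux_height_val_Iic]

lemma aux_krullDim_Icc {Y Z : β} (hYZ : Y ≤ Z) :
    Order.krullDim (Set.Icc Y Z)
      = (Order.height (⟨Z, hYZ, le_refl Z⟩ : Set.Icc Y Z) : WithBot ℕ∞) :=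
  aux_krullDim_eq_height_top _ (fun x => Subtype.coe_le_coe.mp x.2.2)

lemma aux_icc_covBy {Y Z : β} {x y : Set.Icc Y Z} (h : x ⋖ y) : x.1 ⋖ y.1 := by
  have h1' : x.1 < y.1 := Subtype.coe_lt_coe.mpr h.lt
  have h2' : ∀ ⦃c⦄, x.1 < c → ¬ c < y.1 := by
    intro c hc1 hc2
    have hmem : c ∈ Set.Icc Y Z := ⟨x.2.1.trans hc1.le, hc2.le.trans y.2.2⟩
    exact h.2 ((Subtype.coe_lt_coe (x := x) (y := ⟨c, hmem⟩)).mp hc1)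
      ((Subtype.coe_lt_coe (x := (⟨c, hmem⟩ : Set.Icc Y Z)) (y := y)).mp hc2)
  exact And.intro h1' h2'

lemma aux_isMin_icc {Y Z : β} (hYZ : Y ≤ Z) {x : Set.Icc Y Z} (h : IsMin x) : x.1 = Y := by
  have hb : (⟨Y, le_refl Y, hYZ⟩ : Set.Icc Y Z) ≤ x :=
    Subtype.coe_le_coe.mp x.2.1
  exact le_antisymm (Subtype.coe_le_coe.mpr (h hb)) x.2.1

lemma aux_height_icc_covBy {Y Z : β} (h : Y ⋖ Z) :
    Order.height (⟨Z, h.le, le_refl Z⟩ : Set.Icc Y Z) = 1 := by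
  apply le_antisymm
  · rw [show (1 : ℕ∞) = ((1 : ℕ) : ℕ∞) from rfl, Order.height_le_coe_iff]
    intro y hy
    have hyZ : y.1 < Z := Subtype.coe_lt_coe.mpr hy
    have hyY : y.1 = Y := by
      rcases eq_or_lt_of_le y.2.1 with h' | h'
      · exact h'.symm
      · exact absurd hyZ (h.2 h' |>.elim)
    have hmin : IsMin y := by
      intro b _
      exact Subtype.coe_le_coe.mp (by rw [hyY]; exact b.2.1)
    simp [Order.height_eq_zero.mpr hmin]
  · refine ENat.one_le_iff_ne_zero.mpr ?_
    rw [Ne, Order.height_eq_zero]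
    intro hmin
    have := hmin (b := ⟨Y, le_refl Y, h.le⟩) (Subtype.mk_le_mk.mpr h.le)
    exact absurd (le_antisymm (Subtype.coe_le_coe.mpr this) h.le) (ne_of_gt h.lt)

end Aux

theorem stmt_4 (X : Type*) [TopologicalSpace X] [NoetherianSpace X] [Nonempty X]
    (hfd : topologicalKrullDim X < ⊤) :
    (∀ p q : LTSeries (IrreducibleCloseds X),
        IsMaximalChain p → IsMaximalChain q → p.length = q.length) ↔
      ((∀ Z Z' : IrreducibleCloseds X, IsMax Z → IsMax Z' →
          Order.krullDim (Set.Iic Z) = Order.krullDim (Set.Iic Z')) ∧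
        ∀ Y Z : IrreducibleCloseds X, Y ≤ Z →
          Order.krullDim (Set.Iic Z)
            = Order.krullDim (Set.Iic Y) + Order.krullDim (Set.Icc Y Z)) := by
  set α := IrreducibleCloseds X with hα
  have hd : Order.krullDim α < ⊤ := hfd
  constructor
  · intro hyp
    constructor
    · intro Z Z' hZ hZ'
      obtain ⟨p, hpl, hpm, hps, hplen⟩ := aux_exists_sat_to Z (aux_heightFin hd Z)
      obtain ⟨q, hql, hqm, hqs, hqlen⟩ := aux_exists_sat_to Z' (aux_heightFin hd Z')
      have h := hyp p q ⟨hpm, by rw [hpl]; exact hZ, hps⟩ ⟨hqm, by rw [hql]; exact hZ', hqs⟩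
      rw [aux_krullDim_Iic, aux_krullDim_Iic, ← hplen, ← hqlen, h]
    · intro Y Z hYZ
      have hIcc : Order.krullDim (Set.Icc Y Z) < ⊤ :=
        lt_of_le_of_lt (Order.krullDim_le_of_strictMono Subtype.val
          (fun _ _ h => Subtype.coe_lt_coe.mpr h)) hd
      set T : Set.Icc Y Z := ⟨Z, hYZ, le_refl Z⟩ with hT
      obtain ⟨q1, h1l, h1m, h1s, h1len⟩ := aux_exists_sat_to Y (aux_heightFin hd Y)
      obtain ⟨r, hrl, hrm, hrs, hrlen⟩ := aux_exists_sat_to T (aux_heightFin hIcc T)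
      set q2 : LTSeries α := r.map Subtype.val (fun _ _ h => Subtype.coe_lt_coe.mpr h) with hq2
      have h2h : q2.head = Y := by
        show r.head.1 = Y
        exact aux_isMin_icc hYZ hrm
      have h2l : q2.last = Z := by exact congrArg Subtype.val hrl
      have h2s : AuxSat q2 := fun i => aux_icc_covBy (hrs i)
      obtain ⟨q3, h3h, h3m, h3s⟩ := aux_exists_sat_from Z (aux_coheightFin hd Z)
      obtain ⟨s, hsl, hsm, hss, hslen⟩ := aux_exists_sat_to Z (aux_heightFin hd Z)
      have e1 : q1.last = q2.head := by rw [h1l, h2h]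
      have e2 : (q1.smash q2 e1).last = q3.head := by rw [RelSeries.last_smash, h2l, h3h]
      have e3 : s.last = q3.head := by rw [hsl, h3h]
      set u := (q1.smash q2 e1).smash q3 e2 with hu
      set v := s.smash q3 e3 with hv
      have hmcu : IsMaximalChain u := by
        refine ⟨?_, ?_, ?_⟩
        · rw [hu, RelSeries.head_smash, RelSeries.head_smash]; exact h1m
        · rw [hu, RelSeries.last_smash]; exact h3m
        · exact aux_sat_smash e2 (aux_sat_smash e1 h1s h2s) h3s
      have hmcv : IsMaximalChain v := by
        refine ⟨?_, ?_, ?_⟩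
        · rw [hv, RelSeries.head_smash]; exact hsm
        · rw [hv, RelSeries.last_smash]; exact h3m
        · exact aux_sat_smash e3 hss h3s
      have hlen := hyp u v hmcu hmcv
      have hul : u.length = q1.length + q2.length + q3.length := by
        rw [hu]; simp
      have hvl : v.length = s.length + q3.length := by rw [hv]; simp
      rw [hul, hvl] at hlen
      have hkey : s.length = q1.length + q2.length := by omega
      have hq2r : q2.length = r.length := rfl
      have hfin : Order.height Z = Order.height Y + Order.height T := by
        rw [← hslen, ← h1len, ← hrlen, ← hq2r, hkey]
        push_cast
        ring
      rw [aux_krullDim_Iic, aux_krullDim_Iic, aux_krullDim_Icc hYZ, ← hT, hfin]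
      push_cast
      ring
  · rintro ⟨h1, h2⟩ p q hp hq
    have h2' : ∀ Y Z : α, ∀ hYZ : Y ≤ Z, Order.height Z
        = Order.height Y + Order.height (⟨Z, hYZ, le_refl Z⟩ : Set.Icc Y Z) := by
      intro Y Z hYZ
      have := h2 Y Z hYZ
      rw [aux_krullDim_Iic, aux_krullDim_Iic, aux_krullDim_Icc hYZ] at this
      exact_mod_cast this
    have key : ∀ p : LTSeries α, IsMaximalChain p → (p.length : ℕ∞) = Order.height p.last := by
      intro p hp
      have claim : ∀ i : Fin (p.length + 1), Order.height (p.toFun i) = i.1 := by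
        intro i
        induction i using Fin.induction with
        | zero =>
          have : IsMin (p.toFun 0) := hp.1
          simp [Order.height_eq_zero.mpr this]
        | succ i ih =>
          have hcov := hp.2.2 i
          rw [h2' _ _ hcov.le, ih, aux_height_icc_covBy hcov]
          simp only [Fin.coe_castSucc, Fin.val_succ]
          push_cast
          ring
      have := claim (Fin.last p.length)
      rw [RelSeries.last, this]
      simp [Fin.val_last]
    have hpq := h1 p.last q.last hp.2.1 hq.2.1
    rw [aux_krullDim_Iic, aux_krullDim_Iic] at hpq
    have hpq' : Order.height p.last = Order.height q.last := by exact_mod_cast hpq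
    have := (key p hp).trans (hpq'.trans (key q hq).symm)
    exact_mod_cast this
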